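/- Given partial preferences in the hybrid-query model, a matching M is necessarily Pareto optimal if and only if there exists a permutation σ of the agents such that for every completion ≻ of the partial preferences it holds that M = SD_≻(σ). -/

import Mathlib

/-!
Agents and houses are `Fin n`.  Hybrid-query partial preferences: revealed houses
`rev a` with injective rank values `rnk a h` (0-based).  A completion is a complete
strict profile, given by rank equivalences `P a : Fin n ≃ Fin n` (lower rank = more
preferred), agreeing with `rnk` on all revealed houses.  A matching is a bijection
`M : Equiv.Perm (Fin n)` from agents to houses.
-/

def Dominates {n : ℕ} (P : Fin n → (Fin n ≃ Fin n)) (M' M : Equiv.Perm (Fin n)) : Prop :=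
  (∀ a, P a (M' a) ≤ P a (M a)) ∧ ∃ a, P a (M' a) < P a (M a)

def ParetoOptimal {n : ℕ} (P : Fin n → (Fin n ≃ Fin n)) (M : Equiv.Perm (Fin n)) : Prop :=
  ¬ ∃ M' : Equiv.Perm (Fin n), Dominates P M' M

/-- `P` is a completion of the hybrid-query partial preferences `(rev, rnk)`. -/
def HQCompletion {n : ℕ} (rev : Fin n → Finset (Fin n)) (rnk : Fin n → Fin n → Fin n)
    (P : Fin n → (Fin n ≃ Fin n)) : Prop :=
  ∀ a, ∀ h ∈ rev a, P a h = rnk a h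

/-- `IsSD P σ M` says that `M` is the serial dictatorship matching `SD_≻(σ)` under
profile `P`: at every step `i` agent `σ i` is matched to the house it most prefers
among the houses not matched to `σ 0, …, σ (i-1)` (which are exactly `M (σ j)`
for `j ≥ i`, as `M` is a bijection). -/
def IsSD {n : ℕ} (P : Fin n → (Fin n ≃ Fin n)) (σ M : Equiv.Perm (Fin n)) : Prop :=
  ∀ i j : Fin n, i ≤ j → P (σ i) (M (σ i)) ≤ P (σ i) (M (σ j))

/-- Auxiliary relation: `HQrel rev rnk M a b` holds if under some completion agent `b`
strictly prefers `M a` to its own house `M b`. -/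
def HQrel {n : ℕ} (rev : Fin n → Finset (Fin n)) (rnk : Fin n → Fin n → Fin n)
    (M : Equiv.Perm (Fin n)) (a b : Fin n) : Prop :=
  ∃ P : Fin n → (Fin n ≃ Fin n), HQCompletion rev rnk P ∧ P b (M a) < P b (M b)

theorem HQrel_perm_eq_one {n : ℕ} {rev : Fin n → Finset (Fin n)} {rnk : Fin n → Fin n → Fin n}
    {M : Equiv.Perm (Fin n)}
    (hM : ∀ P : Fin n → (Fin n ≃ Fin n), HQCompletion rev rnk P → ParetoOptimal P M)
    (π : Equiv.Perm (Fin n)) (H : ∀ b, π b ≠ b → HQrel rev rnk M b (π b)) : π = 1 := by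
  classical
  by_contra hπ
  obtain ⟨b₀, hb₀⟩ : ∃ b, π b ≠ b := by
    by_contra h; push_neg at h; exact hπ (Equiv.ext h)
  have Hw : ∀ c, π⁻¹ c ≠ c →
      ∃ P : Fin n → (Fin n ≃ Fin n), HQCompletion rev rnk P ∧ P c (M (π⁻¹ c)) < P c (M c) := by
    intro c hc
    have h1 : π (π⁻¹ c) ≠ π⁻¹ c := by
      rw [show π (π⁻¹ c) = c from π.apply_symm_apply c]
      exact fun e => hc e.symm
    obtain ⟨P, hP, hlt⟩ := H (π⁻¹ c) h1
    rw [show π (π⁻¹ c) = c from π.apply_symm_apply c] at hlt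
    exact ⟨P, hP, hlt⟩
  obtain ⟨Q₀, hQ₀, -⟩ := H b₀ hb₀
  set P : Fin n → (Fin n ≃ Fin n) :=
    fun c => if h : π⁻¹ c = c then Q₀ c else (Hw c h).choose c with hPdef
  have hP : HQCompletion rev rnk P := by
    intro a h hh
    by_cases hc : π⁻¹ a = a
    · simp only [hPdef, dif_pos hc]
      exact hQ₀ a h hh
    · simp only [hPdef, dif_neg hc]
      exact (Hw a hc).choose_spec.1 a h hh
  refine hM P hP ⟨M * π⁻¹, ?_, ⟨π b₀, ?_⟩⟩
  · intro c
    by_cases hc : π⁻¹ c = c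
    · simp only [hPdef, dif_pos hc, Equiv.Perm.mul_apply, hc]
      exact le_rfl
    · have h2 := (Hw c hc).choose_spec.2
      simp only [hPdef, dif_neg hc, Equiv.Perm.mul_apply]
      exact h2.le
  · have hc : ¬ (π⁻¹ (π b₀) = π b₀) := by
      rw [show π⁻¹ (π b₀) = b₀ from π.symm_apply_apply b₀]
      exact fun e => hb₀ e.symm
    have h2 := (Hw (π b₀) hc).choose_spec.2
    simp only [hPdef, dif_neg hc, Equiv.Perm.mul_apply]
    exact h2

theorem HQrel_acyclic {n : ℕ} {rev : Fin n → Finset (Fin n)} {rnk : Fin n → Fin n → Fin n}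
    {M : Equiv.Perm (Fin n)}
    (hM : ∀ P : Fin n → (Fin n ≃ Fin n), HQCompletion rev rnk P → ParetoOptimal P M)
    (a : Fin n) : ¬ Relation.TransGen (HQrel rev rnk M) a a := by
  classical
  intro hT
  have hrirr : ∀ x, ¬ HQrel rev rnk M x x := by
    rintro x ⟨P, hP, hlt⟩; exact lt_irrefl _ hlt
  obtain ⟨b, hab, hba⟩ := Relation.TransGen.head'_iff.mp hT
  obtain ⟨l, hl, hlast⟩ := List.exists_isChain_cons_of_relationReflTransGen hba
  set L : List (Fin n) := a :: b :: l with hL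
  have hchain : List.IsChain (HQrel rev rnk M) (a :: b :: l) := List.IsChain.cons_cons hab hl
  set W : ℕ → Fin n := fun t => L.getD t a with hW
  have hlen : 2 ≤ L.length := by simp only [hL, List.length_cons]; omega
  have hstep : ∀ t, t + 1 < L.length → HQrel rev rnk M (W t) (W (t + 1)) := by
    have hchain' : List.Chain' (HQrel rev rnk M) L := hchain
    intro t ht
    have h1 : t < L.length := by omega
    have h2 := List.isChain_iff_getElem.mp hchain' t (by omega)
    show HQrel rev rnk M (L.getD t a) (L.getD (t + 1) a)
    rw [List.getD_eq_getElem _ _ h1, List.getD_eq_getElem _ _ ht]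
    simpa using h2
  have hW0 : W 0 = a := by simp [hW, hL]
  set p : ℕ := L.length - 1 with hp
  have hWp : W p = a := by
    have h1 : p < L.length := by omega
    have h2 : W p = L.getLast (by simp [hL]) := by
      show L.getD p a = _
      rw [List.getD_eq_getElem _ _ h1, List.getLast_eq_getElem]
    rw [h2]
    show (a :: b :: l).getLast (by simp) = a
    rw [List.getLast_cons (List.cons_ne_nil _ _)]
    exact hlast
  -- minimal index of a repeated value
  have hQex : ∃ j, 0 < j ∧ ∃ i, i < j ∧ W i = W j :=
    ⟨p, by omega, 0, by omega, by rw [hW0, hWp]⟩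
  set j := Nat.find hQex with hj
  obtain ⟨hj0, i, hij, hWij⟩ := Nat.find_spec hQex
  have hjle : j ≤ p := Nat.find_le ⟨by omega, 0, by omega, by rw [hW0, hWp]⟩
  have hinj2 : ∀ x y, x < y → y < j → W x ≠ W y := by
    intro x y hxy hyj e
    exact Nat.find_min hQex hyj ⟨by omega, x, hxy, e⟩
  set k := j - i with hk
  have hk1 : 1 ≤ k := by omega
  have hk2 : 2 ≤ k := by
    by_contra h
    have hk1' : k = 1 := by omega
    have hji : j = i + 1 := by omega
    have := hstep i (by omega)
    rw [← hji, ← hWij] at this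
    exact hrirr _ this
  set u : Fin k → Fin n := fun t => W (i + t.val) with hu
  have huinj : Function.Injective u := by
    intro s t e
    by_contra hst
    rcases Nat.lt_or_ge s.val t.val with h | h
    · exact hinj2 (i + s.val) (i + t.val) (by omega) (by omega) e
    · have h' : t.val < s.val := by
        rcases Nat.lt_or_ge t.val s.val with h2 | h2
        · exact h2
        · exact absurd (Fin.ext (le_antisymm h h2)).symm hst
      exact hinj2 (i + t.val) (i + s.val) (by omega) (by omega) e.symm
  set nxt : Fin k → Fin k := fun t => ⟨(t.val + 1) % k, Nat.mod_lt _ (by omega)⟩ with hnxt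
  have hmod : ∀ m, m < k → (m + 1) % k = if m + 1 = k then 0 else m + 1 := by
    intro m hm
    split
    · next h => rw [h, Nat.mod_self]
    · next h => exact Nat.mod_eq_of_lt (by omega)
  have hnxtinj : Function.Injective nxt := by
    intro s t e
    have e' := congrArg Fin.val e
    simp only [hnxt] at e'
    rw [hmod s.val s.isLt, hmod t.val t.isLt] at e'
    apply Fin.ext
    have hs := s.isLt; have ht := t.isLt
    split at e' <;> split at e' <;> omega
  set g : Fin n → Fin n := fun x => if h : ∃ t, u t = x then u (nxt h.choose) else x with hg
  have hg_mem : ∀ t : Fin k, g (u t) = u (nxt t) := by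
    intro t
    have h : ∃ s, u s = u t := ⟨t, rfl⟩
    simp only [hg, dif_pos h]
    rw [huinj h.choose_spec]
  have hg_not : ∀ x, (¬ ∃ t, u t = x) → g x = x := by
    intro x h; simp only [hg, dif_neg h]
  have ginj : Function.Injective g := by
    intro x y e
    by_cases hx : ∃ t, u t = x <;> by_cases hy : ∃ s, u s = y
    · obtain ⟨t, ht⟩ := hx; obtain ⟨s, hs⟩ := hy
      rw [← ht, ← hs] at e ⊢
      rw [hg_mem, hg_mem] at e
      rw [hnxtinj (huinj e)]
    · exfalso
      rw [hg_not y hy] at e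
      obtain ⟨t, ht⟩ := hx
      rw [← ht, hg_mem] at e
      exact hy ⟨nxt t, e⟩
    · exfalso
      rw [hg_not x hx] at e
      obtain ⟨s, hs⟩ := hy
      rw [← hs, hg_mem] at e
      exact hx ⟨nxt s, e.symm⟩
    · rwa [hg_not x hx, hg_not y hy] at e
  set π : Equiv.Perm (Fin n) := Equiv.ofBijective g (Finite.injective_iff_bijective.mp ginj)
    with hπdef
  have hπ_apply : ∀ x, π x = g x := fun x => rfl
  have H : ∀ c, π c ≠ c → HQrel rev rnk M c (π c) := by
    intro c hc
    have hx : ∃ t, u t = c := by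
      by_contra h
      exact hc (by rw [hπ_apply, hg_not c h])
    obtain ⟨t, ht⟩ := hx
    rw [← ht, hπ_apply, hg_mem]
    -- show HQrel (u t) (u (nxt t))
    rcases Nat.lt_or_ge (t.val + 1) k with h | h
    · have hval : (nxt t).val = t.val + 1 := by
        simp only [hnxt]; rw [hmod t.val t.isLt]; split <;> omega
      have hstep2 := hstep (i + t.val) (by omega)
      show HQrel rev rnk M (W (i + t.val)) (W (i + (nxt t).val))
      rw [hval]
      have heq : i + (t.val + 1) = i + t.val + 1 := by omega
      rw [heq]
      exact hstep2
    · have htv : t.val + 1 = k := by have := t.isLt; omega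
      have hval : (nxt t).val = 0 := by
        simp only [hnxt]; rw [hmod t.val t.isLt]; split <;> omega
      have hstep2 := hstep (j - 1) (by omega)
      have h1 : j - 1 + 1 = j := by omega
      rw [h1, ← hWij] at hstep2
      have h2 : i + t.val = j - 1 := by omega
      show HQrel rev rnk M (W (i + t.val)) (W (i + (nxt t).val))
      rw [hval, h2]
      simpa using hstep2
  have hπ1 : π = 1 := HQrel_perm_eq_one hM π H
  -- but π moves u 0
  have h0 : π (u ⟨0, by omega⟩) = u (nxt ⟨0, by omega⟩) := by
    rw [hπ_apply, hg_mem]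
  rw [hπ1] at h0
  have h1 : (⟨0, by omega⟩ : Fin k) = nxt ⟨0, by omega⟩ := huinj (by simpa using h0)
  have h2 := congrArg Fin.val h1
  have h3 : (nxt (⟨0, by omega⟩ : Fin k)).val = 1 := by
    show (0 + 1) % k = 1
    exact Nat.mod_eq_of_lt (by omega)
  rw [h3] at h2
  exact Nat.zero_ne_one h2

/-- A matching is necessarily Pareto optimal for hybrid-query partial preferences iff
there is a single permutation `σ` of the agents such that `M` is the serial
dictatorship outcome for `σ` under every completion of the partial preferences. -/
theorem npo_hybrid_iff_serialDictatorship {n : ℕ}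
    (rev : Fin n → Finset (Fin n)) (rnk : Fin n → Fin n → Fin n)
    (hinj : ∀ a, Set.InjOn (rnk a) (rev a))
    (M : Equiv.Perm (Fin n)) :
    (∀ P : Fin n → (Fin n ≃ Fin n), HQCompletion rev rnk P → ParetoOptimal P M) ↔
      ∃ σ : Equiv.Perm (Fin n),
        ∀ P : Fin n → (Fin n ≃ Fin n), HQCompletion rev rnk P → IsSD P σ M := by
  classical
  constructor
  · intro hM
    set below : Fin n → ℕ :=
      fun a => (Finset.univ.filter (fun x => Relation.TransGen (HQrel rev rnk M) x a)).card
      with hbelow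
    have hmono : ∀ a b, HQrel rev rnk M a b → below a < below b := by
      intro a b hab
      apply Finset.card_lt_card
      rw [Finset.ssubset_iff_of_subset]
      · refine ⟨a, ?_, ?_⟩
        · simp only [Finset.mem_filter, Finset.mem_univ, true_and]
          exact Relation.TransGen.single hab
        · simp only [Finset.mem_filter, Finset.mem_univ, true_and]
          exact HQrel_acyclic hM a
      · intro x hx
        simp only [Finset.mem_filter, Finset.mem_univ, true_and] at hx ⊢
        exact hx.trans (Relation.TransGen.single hab)
    set key : Fin n → ℕ ×ₗ (Fin n) := fun a => toLex (below a, a) with hkey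
    set σ := Tuple.sort key with hσ
    refine ⟨σ, ?_⟩
    intro P hP i j hij
    by_contra hlt
    push_neg at hlt
    have hr1 : HQrel rev rnk M (σ j) (σ i) := ⟨P, hP, hlt⟩
    have h1 : key (σ j) < key (σ i) := by
      rw [hkey, Prod.Lex.lt_iff]
      exact Or.inl (hmono _ _ hr1)
    have h2 : key (σ i) ≤ key (σ j) := Tuple.monotone_sort key hij
    exact absurd h1 (not_lt.mpr h2)
  · rintro ⟨σ, hσ⟩ P hP ⟨M', hle, a₀, hlt⟩
    have hSD := hσ P hP
    set S : Finset (Fin n) := Finset.univ.filter (fun i => M' (σ i) ≠ M (σ i)) with hS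
    have hSne : S.Nonempty := by
      refine ⟨σ⁻¹ a₀, ?_⟩
      simp only [hS, Finset.mem_filter, Finset.mem_univ, true_and,
        Equiv.Perm.coe_inv, Equiv.apply_symm_apply]
      intro e
      rw [e] at hlt
      exact lt_irrefl _ hlt
    set i := S.min' hSne with hi
    have hiS : i ∈ S := S.min'_mem hSne
    have hine : M' (σ i) ≠ M (σ i) := by
      simpa only [hS, Finset.mem_filter, Finset.mem_univ, true_and] using hiS
    set j := σ⁻¹ (M⁻¹ (M' (σ i))) with hj
    have hMj : M (σ j) = M' (σ i) := by
      rw [hj]; simp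
    have hijle : i ≤ j := by
      by_contra hji
      push_neg at hji
      have hjS : j ∉ S := fun h => absurd (S.min'_le j h) (not_le.mpr hji)
      have hjeq : M' (σ j) = M (σ j) := by
        have := hjS
        simp only [hS, Finset.mem_filter, Finset.mem_univ, true_and, not_not] at this
        exact this
      have h1 : M' (σ j) = M' (σ i) := by rw [hjeq, hMj]
      have h2 : j = i := σ.injective (M'.injective h1)
      exact absurd h2 (ne_of_lt hji)
    have h1 := hSD i j hijle
    rw [hMj] at h1
    have h2 := hle (σ i)
    have h3 : P (σ i) (M' (σ i)) = P (σ i) (M (σ i)) := le_antisymm h2 h1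
    exact hine ((P (σ i)).injective h3)
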